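/- Let F1 be the distribution function of a nonnegative random variable with generalized inverse F1^{-1} satisfying 0 < ∫_0^1 (F1^{-1}(u))^2 du < ∞. Define the sequence of distribution functions on [0,1] by L^0(x) = (∫_0^x (F1^{-1}(u))^2 du) / (∫_0^1 (F1^{-1}(u))^2 du) and, for i ≥ 0, L^{i+1}(x) = (∫_0^x (L^{i,-1}(u))^2 du) / (∫_0^1 (L^{i,-1}(u))^2 du), where L^{i,-1} is the generalized inverse of L^i. Then L^n converges uniformly on [0,1] to the square-law distribution function x ↦ x^2. -/

import Mathlib

open MeasureTheory Set Filter

/-- Generalized inverse (quantile function) of a nondecreasing function. -/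
noncomputable def genInv (F : ℝ → ℝ) (u : ℝ) : ℝ := sInf {y : ℝ | u ≤ F y}

private lemma genInv_set_lb {G : ℝ → ℝ} (h0 : ∀ y ≤ 0, G y = 0) {u : ℝ} (hu : 0 < u) :
    ∀ z ∈ {y : ℝ | u ≤ G y}, 0 ≤ z := by
  intro z hz
  by_contra hzn
  push_neg at hzn
  have h := h0 z hzn.le
  simp only [mem_setOf_eq, h] at hz
  linarith

private lemma genInv_nonneg {G : ℝ → ℝ} (h0 : ∀ y ≤ 0, G y = 0) {u : ℝ} (hu : 0 < u) :
    0 ≤ genInv G u := Real.sInf_nonneg (genInv_set_lb h0 hu)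

private lemma genInv_le_one {G : ℝ → ℝ} (h0 : ∀ y ≤ 0, G y = 0) (h1 : G 1 = 1) {u : ℝ}
    (hu : 0 < u) (hu1 : u ≤ 1) : genInv G u ≤ 1 :=
  csInf_le ⟨0, genInv_set_lb h0 hu⟩ (by simp only [mem_setOf_eq, h1]; exact hu1)

private lemma genInv_zero_of_nonpos {G : ℝ → ℝ} (hG : ∀ y, 0 ≤ G y) {u : ℝ} (hu : u ≤ 0) :
    genInv G u = 0 := by
  have hset : {y : ℝ | u ≤ G y} = univ := eq_univ_of_forall (fun y => le_trans hu (hG y))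
  rw [genInv, hset]
  refine Real.sInf_of_not_bddBelow ?_
  rintro ⟨b, hb⟩
  have := hb (mem_univ (b - 1))
  linarith

private lemma genInv_zero_of_gt_one {G : ℝ → ℝ} (hG : ∀ y, G y ≤ 1) {u : ℝ} (hu : 1 < u) :
    genInv G u = 0 := by
  have hset : {y : ℝ | u ≤ G y} = ∅ := by
    refine eq_empty_iff_forall_notMem.2 (fun y hy => ?_)
    simp only [mem_setOf_eq] at hy
    linarith [hG y]
  rw [genInv, hset, Real.sInf_empty]

private lemma genInv_mono_le {G : ℝ → ℝ} (h0 : ∀ y ≤ 0, G y = 0) (h1 : G 1 = 1) {u u' : ℝ}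
    (hu : 0 < u) (huu : u ≤ u') (hu1 : u' ≤ 1) : genInv G u ≤ genInv G u' :=
  csInf_le_csInf ⟨0, genInv_set_lb h0 hu⟩ ⟨1, by simp only [mem_setOf_eq, h1]; exact hu1⟩
    (fun y hy => le_trans huu hy)

private lemma genInv_ge {G : ℝ → ℝ} (hmono : Monotone G) (h1 : G 1 = 1) {u y : ℝ}
    (hu1 : u ≤ 1) (hy : G y < u) : y ≤ genInv G u := by
  refine le_csInf ⟨1, by simp only [mem_setOf_eq, h1]; exact hu1⟩ (fun t ht => ?_)
  simp only [mem_setOf_eq] at ht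
  by_contra hty
  push_neg at hty
  exact absurd ht (not_le.2 (lt_of_le_of_lt (hmono hty.le) hy))

private lemma div_mono_num {a b c : ℝ} (hc : 0 < c) (h : a ≤ b) : a / c ≤ b / c := by
  rw [div_eq_mul_inv, div_eq_mul_inv]
  exact mul_le_mul_of_nonneg_right h (inv_nonneg.2 hc.le)

private lemma rpow_diff_le {x A B : ℝ} (hx0 : 0 ≤ x) (hx1 : x ≤ 1) (hA : 1 ≤ A) (hAB : A ≤ B) :
    x ^ A - x ^ B ≤ B - A := by
  rcases eq_or_lt_of_le hx0 with h | hx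
  · rw [← h, Real.zero_rpow (by linarith : A ≠ 0), Real.zero_rpow (by linarith : B ≠ 0)]
    linarith
  · have hBA : 0 ≤ B - A := by linarith
    have hlog : 0 ≤ -Real.log x := by
      have := Real.log_nonpos hx0 hx1
      linarith
    have hsplit : x ^ B = x ^ A * x ^ (B - A) := by
      rw [← Real.rpow_add hx]; ring_nf
    have hle1' : x ^ (B - A) ≤ 1 := Real.rpow_le_one hx0 hx1 hBA
    have h2 : 1 - x ^ (B - A) ≤ (B - A) * (-Real.log x) := by
      have he := Real.add_one_le_exp ((B - A) * Real.log x)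
      have hxp : x ^ (B - A) = Real.exp ((B - A) * Real.log x) := by
        rw [Real.rpow_def_of_pos hx, mul_comm]
      rw [hxp]
      linarith
    have h3 : x ^ A ≤ x := by
      have := Real.rpow_le_rpow_of_exponent_ge hx hx1 hA
      rwa [Real.rpow_one] at this
    have h4 : x * (-Real.log x) ≤ 1 := by
      have hinv := Real.log_le_sub_one_of_pos (inv_pos.2 hx)
      rw [Real.log_inv] at hinv
      have : -Real.log x ≤ x⁻¹ := by linarith [inv_pos.2 hx]
      calc x * (-Real.log x) ≤ x * x⁻¹ := mul_le_mul_of_nonneg_left this hx.le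
        _ = 1 := mul_inv_cancel₀ hx.ne'
    have hxA0 : 0 ≤ x ^ A := (Real.rpow_pos_of_pos hx A).le
    calc x ^ A - x ^ B = x ^ A * (1 - x ^ (B - A)) := by rw [hsplit]; ring
      _ ≤ x * (1 - x ^ (B - A)) := mul_le_mul_of_nonneg_right h3 (by linarith)
      _ ≤ x * ((B - A) * (-Real.log x)) := mul_le_mul_of_nonneg_left h2 hx.le
      _ = (B - A) * (x * (-Real.log x)) := by ring
      _ ≤ (B - A) * 1 := mul_le_mul_of_nonneg_left h4 hBA
      _ = B - A := mul_one _

private lemma scale_integral (f : ℝ → ℝ) {a : ℝ} (ha : 0 < a) :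
    ∫ u in Ioc (0:ℝ) a, f u = a * ∫ v in Ioc (0:ℝ) 1, f (a * v) := by
  have h := intervalIntegral.integral_comp_mul_left (a := 0) (b := 1) f ha.ne'
  rw [mul_zero, mul_one] at h
  rw [← intervalIntegral.integral_of_le ha.le, ← intervalIntegral.integral_of_le zero_le_one, h,
    smul_eq_mul, ← mul_assoc, mul_inv_cancel₀ ha.ne', one_mul]

private lemma intOn_comp (ψ : ℝ → ℝ) (hmeas : Measurable ψ)
    (h01 : ∀ u, 0 ≤ ψ u ∧ ψ u ≤ 1) (a : ℝ) :
    IntegrableOn (fun v => ψ (a * v) ^ 2) (Ioc (0:ℝ) 1) := by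
  refine Integrable.mono' (g := fun _ => (1:ℝ)) (integrableOn_const (ne_of_lt ?_)) ?_ ?_
  · rw [Real.volume_Ioc]; exact ENNReal.ofReal_lt_top
  · exact ((hmeas.comp (measurable_const_mul a)).pow_const 2).aestronglyMeasurable
  · refine Eventually.of_forall (fun v => ?_)
    have h := h01 (a * v)
    rw [Real.norm_eq_abs, abs_of_nonneg (by positivity)]
    show ψ (a * v) ^ 2 ≤ (1:ℝ)
    nlinarith [h.1, h.2]

private lemma num_le (ψ : ℝ → ℝ) (hmeas : Measurable ψ) (h01 : ∀ u, 0 ≤ ψ u ∧ ψ u ≤ 1)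
    {φ : ℝ} (hφ : 0 ≤ φ)
    (hshape : ∀ s ∈ Ioc (0:ℝ) 1, ∀ v ∈ Ioc (0:ℝ) 1, ψ (s * v) ≤ s ^ φ * ψ v)
    {x y : ℝ} (hx : x ∈ Ioc (0:ℝ) 1) (hy : y ∈ Ioc (0:ℝ) 1) :
    ∫ u in Ioc (0:ℝ) (x * y), ψ u ^ 2 ≤ x ^ (1 + 2 * φ) * ∫ u in Ioc (0:ℝ) y, ψ u ^ 2 := by
  obtain ⟨hx0, hx1⟩ := hx
  obtain ⟨hy0, hy1⟩ := hy
  have hxy0 : 0 < x * y := mul_pos hx0 hy0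
  have int1 : IntegrableOn (fun v => ψ (x * y * v) ^ 2) (Ioc (0:ℝ) 1) :=
    intOn_comp ψ hmeas h01 (x * y)
  have int2 : IntegrableOn (fun v => ψ (y * v) ^ 2) (Ioc (0:ℝ) 1) :=
    intOn_comp ψ hmeas h01 y
  have key : ∀ v ∈ Ioc (0:ℝ) 1, ψ (x * y * v) ^ 2 ≤ (x ^ φ) ^ 2 * ψ (y * v) ^ 2 := by
    intro v hv
    have hyv : y * v ∈ Ioc (0:ℝ) 1 :=
      ⟨mul_pos hy0 hv.1, by nlinarith [hv.1.le, hv.2, hy0.le]⟩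
    have h := hshape x ⟨hx0, hx1⟩ (y * v) hyv
    rw [← mul_assoc] at h
    have hnn : 0 ≤ ψ (x * y * v) := (h01 _).1
    calc ψ (x * y * v) ^ 2 ≤ (x ^ φ * ψ (y * v)) ^ 2 := pow_le_pow_left₀ hnn h 2
      _ = (x ^ φ) ^ 2 * ψ (y * v) ^ 2 := by ring
  have mono := setIntegral_mono_on int1 (int2.const_mul ((x ^ φ) ^ 2)) measurableSet_Ioc key
  rw [integral_const_mul] at mono
  rw [scale_integral (fun u => ψ u ^ 2) hxy0, scale_integral (fun u => ψ u ^ 2) hy0]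
  have hxpow : x ^ (1 + 2 * φ) = x * (x ^ φ) ^ 2 := by
    rw [show (1:ℝ) + 2 * φ = 1 + (φ + φ) by ring, Real.rpow_add hx0, Real.rpow_add hx0,
      Real.rpow_one, pow_two]
  calc x * y * ∫ v in Ioc (0:ℝ) 1, ψ (x * y * v) ^ 2
      ≤ x * y * ((x ^ φ) ^ 2 * ∫ v in Ioc (0:ℝ) 1, ψ (y * v) ^ 2) :=
        mul_le_mul_of_nonneg_left mono (by positivity)
    _ = x ^ (1 + 2 * φ) * (y * ∫ v in Ioc (0:ℝ) 1, ψ (y * v) ^ 2) := by rw [hxpow]; ring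

private lemma num_ge (ψ : ℝ → ℝ) (hmeas : Measurable ψ) (h01 : ∀ u, 0 ≤ ψ u ∧ ψ u ≤ 1)
    {θ : ℝ} (hθ : 0 ≤ θ)
    (hshape : ∀ s ∈ Ioc (0:ℝ) 1, ∀ v ∈ Ioc (0:ℝ) 1, s ^ θ * ψ v ≤ ψ (s * v))
    {x y : ℝ} (hx : x ∈ Ioc (0:ℝ) 1) (hy : y ∈ Ioc (0:ℝ) 1) :
    x ^ (1 + 2 * θ) * ∫ u in Ioc (0:ℝ) y, ψ u ^ 2 ≤ ∫ u in Ioc (0:ℝ) (x * y), ψ u ^ 2 := by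
  obtain ⟨hx0, hx1⟩ := hx
  obtain ⟨hy0, hy1⟩ := hy
  have hxy0 : 0 < x * y := mul_pos hx0 hy0
  have int1 : IntegrableOn (fun v => ψ (x * y * v) ^ 2) (Ioc (0:ℝ) 1) :=
    intOn_comp ψ hmeas h01 (x * y)
  have int2 : IntegrableOn (fun v => ψ (y * v) ^ 2) (Ioc (0:ℝ) 1) :=
    intOn_comp ψ hmeas h01 y
  have key : ∀ v ∈ Ioc (0:ℝ) 1, (x ^ θ) ^ 2 * ψ (y * v) ^ 2 ≤ ψ (x * y * v) ^ 2 := by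
    intro v hv
    have hyv : y * v ∈ Ioc (0:ℝ) 1 :=
      ⟨mul_pos hy0 hv.1, by nlinarith [hv.1.le, hv.2, hy0.le]⟩
    have h := hshape x ⟨hx0, hx1⟩ (y * v) hyv
    rw [← mul_assoc] at h
    have hnn : 0 ≤ x ^ θ * ψ (y * v) :=
      mul_nonneg (Real.rpow_pos_of_pos hx0 θ).le (h01 _).1
    calc (x ^ θ) ^ 2 * ψ (y * v) ^ 2 = (x ^ θ * ψ (y * v)) ^ 2 := by ring
      _ ≤ ψ (x * y * v) ^ 2 := pow_le_pow_left₀ hnn h 2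
  have mono := setIntegral_mono_on (int2.const_mul ((x ^ θ) ^ 2)) int1 measurableSet_Ioc key
  rw [integral_const_mul] at mono
  rw [scale_integral (fun u => ψ u ^ 2) hxy0, scale_integral (fun u => ψ u ^ 2) hy0]
  have hxpow : x ^ (1 + 2 * θ) = x * (x ^ θ) ^ 2 := by
    rw [show (1:ℝ) + 2 * θ = 1 + (θ + θ) by ring, Real.rpow_add hx0, Real.rpow_add hx0,
      Real.rpow_one, pow_two]
  calc x ^ (1 + 2 * θ) * (y * ∫ v in Ioc (0:ℝ) 1, ψ (y * v) ^ 2)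
      = x * y * ((x ^ θ) ^ 2 * ∫ v in Ioc (0:ℝ) 1, ψ (y * v) ^ 2) := by rw [hxpow]; ring
    _ ≤ x * y * ∫ v in Ioc (0:ℝ) 1, ψ (x * y * v) ^ 2 :=
        mul_le_mul_of_nonneg_left mono (by positivity)

private lemma Lmult_up (Lf' ψ : ℝ → ℝ) (hmeas : Measurable ψ)
    (h01 : ∀ u, 0 ≤ ψ u ∧ ψ u ≤ 1) {φ : ℝ} (hφ : 0 ≤ φ)
    (hshape : ∀ s ∈ Ioc (0:ℝ) 1, ∀ v ∈ Ioc (0:ℝ) 1, ψ (s * v) ≤ s ^ φ * ψ v)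
    (hc : 0 < ∫ u in Ioc (0:ℝ) 1, ψ u ^ 2)
    (hL' : ∀ x ∈ Ioc (0:ℝ) 1, Lf' x = (∫ u in Ioc (0:ℝ) x, ψ u ^ 2) / ∫ u in Ioc (0:ℝ) 1, ψ u ^ 2) :
    ∀ x ∈ Ioc (0:ℝ) 1, ∀ y ∈ Ioc (0:ℝ) 1, Lf' (x * y) ≤ x ^ (1 + 2 * φ) * Lf' y := by
  intro x hx y hy
  have hxy : x * y ∈ Ioc (0:ℝ) 1 :=
    ⟨mul_pos hx.1 hy.1, by nlinarith [hx.1.le, hx.2, hy.1.le, hy.2]⟩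
  rw [hL' _ hxy, hL' _ hy, ← mul_div_assoc]
  exact div_mono_num hc (num_le ψ hmeas h01 hφ hshape hx hy)

private lemma Lmult_down (Lf' ψ : ℝ → ℝ) (hmeas : Measurable ψ)
    (h01 : ∀ u, 0 ≤ ψ u ∧ ψ u ≤ 1) {θ : ℝ} (hθ : 0 ≤ θ)
    (hshape : ∀ s ∈ Ioc (0:ℝ) 1, ∀ v ∈ Ioc (0:ℝ) 1, s ^ θ * ψ v ≤ ψ (s * v))
    (hc : 0 < ∫ u in Ioc (0:ℝ) 1, ψ u ^ 2)
    (hL' : ∀ x ∈ Ioc (0:ℝ) 1, Lf' x = (∫ u in Ioc (0:ℝ) x, ψ u ^ 2) / ∫ u in Ioc (0:ℝ) 1, ψ u ^ 2) :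
    ∀ x ∈ Ioc (0:ℝ) 1, ∀ y ∈ Ioc (0:ℝ) 1, x ^ (1 + 2 * θ) * Lf' y ≤ Lf' (x * y) := by
  intro x hx y hy
  have hxy : x * y ∈ Ioc (0:ℝ) 1 :=
    ⟨mul_pos hx.1 hy.1, by nlinarith [hx.1.le, hx.2, hy.1.le, hy.2]⟩
  rw [hL' _ hxy, hL' _ hy, ← mul_div_assoc]
  exact div_mono_num hc (num_ge ψ hmeas h01 hθ hshape hx hy)

private lemma inv_upper (Lf : ℝ → ℝ) {A : ℝ} (hA : 1 ≤ A)
    (hcont : Continuous Lf) (h0 : ∀ y ≤ 0, Lf y = 0) (h1 : Lf 1 = 1)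
    (hq01 : ∀ u ∈ Ioc (0:ℝ) 1, 0 ≤ genInv Lf u ∧ genInv Lf u ≤ 1)
    (hqmono : ∀ u u', 0 < u → u ≤ u' → u' ≤ 1 → genInv Lf u ≤ genInv Lf u')
    (hmult : ∀ x ∈ Ioc (0:ℝ) 1, ∀ y ∈ Ioc (0:ℝ) 1, x ^ A * Lf y ≤ Lf (x * y)) :
    ∀ u ∈ Ioc (0:ℝ) 1, ∀ w ∈ Ioc (0:ℝ) 1, genInv Lf (u * w) ≤ u ^ (1/A) * genInv Lf w := by
  intro u hu w hw
  have hA0 : (0:ℝ) < A := lt_of_lt_of_le one_pos hA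
  have huw : u * w ∈ Ioc (0:ℝ) 1 :=
    ⟨mul_pos hu.1 hw.1, by nlinarith [hu.1.le, hu.2, hw.1.le, hw.2]⟩
  obtain ⟨hz0, hz1⟩ := hq01 w hw
  rcases eq_or_lt_of_le hz0 with hz | hz
  · have hle : genInv Lf (u * w) ≤ genInv Lf w :=
      hqmono _ _ huw.1 (by nlinarith [hu.1.le, hu.2, hw.1.le]) hw.2
    rw [← hz, mul_zero]
    exact le_trans hle (le_of_eq hz.symm)
  · have hmemS : w ≤ Lf (genInv Lf w) := by
      have hclosed : IsClosed {y : ℝ | w ≤ Lf y} := isClosed_le continuous_const hcont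
      have hne : Set.Nonempty {y : ℝ | w ≤ Lf y} :=
        ⟨1, by simp only [mem_setOf_eq, h1]; exact hw.2⟩
      have hbdd : BddBelow {y : ℝ | w ≤ Lf y} := ⟨0, genInv_set_lb h0 hw.1⟩
      exact (hclosed.csInf_mem hne hbdd : w ≤ Lf (sInf {y : ℝ | w ≤ Lf y}))
    have hx : u ^ (1/A) ∈ Ioc (0:ℝ) 1 :=
      ⟨Real.rpow_pos_of_pos hu.1 _, Real.rpow_le_one hu.1.le hu.2 (by positivity)⟩
    have hzI : genInv Lf w ∈ Ioc (0:ℝ) 1 := ⟨hz, hz1⟩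
    have h := hmult _ hx _ hzI
    have hxA : (u ^ (1/A)) ^ A = u := by
      rw [← Real.rpow_mul hu.1.le, one_div_mul_cancel hA0.ne', Real.rpow_one]
    rw [hxA] at h
    have hfin : u * w ≤ Lf (u ^ (1/A) * genInv Lf w) :=
      le_trans (mul_le_mul_of_nonneg_left hmemS hu.1.le) h
    exact csInf_le ⟨0, genInv_set_lb h0 huw.1⟩ hfin

private lemma inv_lower (Lf : ℝ → ℝ) {B : ℝ} (hB : 1 ≤ B)
    (h0 : ∀ y ≤ 0, Lf y = 0) (h1 : Lf 1 = 1)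
    (hq01 : ∀ u ∈ Ioc (0:ℝ) 1, 0 ≤ genInv Lf u ∧ genInv Lf u ≤ 1)
    (hmult : ∀ x ∈ Ioc (0:ℝ) 1, ∀ y ∈ Ioc (0:ℝ) 1, Lf (x * y) ≤ x ^ B * Lf y) :
    ∀ u ∈ Ioc (0:ℝ) 1, ∀ w ∈ Ioc (0:ℝ) 1, u ^ (1/B) * genInv Lf w ≤ genInv Lf (u * w) := by
  intro u hu w hw
  have hB0 : (0:ℝ) < B := lt_of_lt_of_le one_pos hB
  have huw0 : 0 < u * w := mul_pos hu.1 hw.1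
  have huw1 : u * w ≤ 1 := by nlinarith [hu.1.le, hu.2, hw.1.le, hw.2]
  obtain ⟨hz0, hz1⟩ := hq01 w hw
  have hx0 : 0 < u ^ (1/B) := Real.rpow_pos_of_pos hu.1 _
  have hx1 : u ^ (1/B) ≤ 1 := Real.rpow_le_one hu.1.le hu.2 (by positivity)
  refine le_csInf ⟨1, by simp only [mem_setOf_eq, h1]; exact huw1⟩ ?_
  intro t ht
  simp only [mem_setOf_eq] at ht
  have ht0 : 0 < t := by
    by_contra h
    push_neg at h
    rw [h0 t h] at ht
    linarith
  rcases le_or_gt 1 t with h1t | h1t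
  · calc u ^ (1/B) * genInv Lf w ≤ 1 * 1 := mul_le_mul hx1 hz1 hz0 zero_le_one
      _ = 1 := one_mul 1
      _ ≤ t := h1t
  · have hz0' : 0 < t / u ^ (1/B) := div_pos ht0 hx0
    rcases le_or_gt 1 (t / u ^ (1/B)) with h1z | h1z
    · have hxt : u ^ (1/B) ≤ t := by
        rw [le_div_iff₀ hx0] at h1z
        linarith
      calc u ^ (1/B) * genInv Lf w ≤ u ^ (1/B) * 1 := mul_le_mul_of_nonneg_left hz1 hx0.le
        _ = u ^ (1/B) := mul_one _
        _ ≤ t := hxt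
    · have h := hmult _ ⟨hx0, hx1⟩ _ ⟨hz0', h1z.le⟩
      have hxz : u ^ (1/B) * (t / u ^ (1/B)) = t := by
        field_simp
      have hxB : (u ^ (1/B)) ^ B = u := by
        rw [← Real.rpow_mul hu.1.le, one_div_mul_cancel hB0.ne', Real.rpow_one]
      rw [hxz, hxB] at h
      have hwLz : w ≤ Lf (t / u ^ (1/B)) := by
        have h2 : u * w ≤ u * Lf (t / u ^ (1/B)) := le_trans ht h
        exact le_of_mul_le_mul_left h2 hu.1
      have hQwz : genInv Lf w ≤ t / u ^ (1/B) :=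
        csInf_le ⟨0, genInv_set_lb h0 hw.1⟩ hwLz
      calc u ^ (1/B) * genInv Lf w ≤ u ^ (1/B) * (t / u ^ (1/B)) :=
            mul_le_mul_of_nonneg_left hQwz hx0.le
        _ = t := hxz

private lemma Lfacts (g : ℝ → ℝ) (Lf : ℝ → ℝ)
    (hg0 : ∀ u, 0 ≤ g u)
    (hgle : ∀ u ≤ 0, g u = 0)
    (hggt : ∀ u, 1 < u → g u = 0)
    (hint : IntegrableOn g (Ioc (0:ℝ) 1))
    (hgpos : 0 < ∫ u in Ioc (0:ℝ) 1, g u)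
    (hLdef : ∀ x, Lf x = (∫ u in Ioc (0:ℝ) x, g u) / ∫ u in Ioc (0:ℝ) 1, g u) :
    (∀ y ≤ 0, Lf y = 0) ∧ (∀ y, 0 ≤ Lf y) ∧ (∀ y, Lf y ≤ 1) ∧ Lf 1 = 1 ∧
    Monotone Lf ∧ Continuous Lf ∧ (∀ u, 0 < u → ∃ y, 0 < y ∧ Lf y < u) := by
  have hglob : Integrable g := by
    have hind : g = (Ioc (0:ℝ) 1).indicator g := by
      funext u
      by_cases hu : u ∈ Ioc (0:ℝ) 1
      · rw [indicator_of_mem hu]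
      · rw [indicator_of_notMem hu]
        rcases lt_or_ge (1:ℝ) u with h | h
        · exact hggt u h
        · refine hgle u ?_
          by_contra h0
          push_neg at h0
          exact hu ⟨h0, h⟩
    rw [hind]
    exact hint.integrable_indicator measurableSet_Ioc
  have hN : ∀ x, ∫ u in Ioc (0:ℝ) x, g u = ∫ u in (0:ℝ)..x, g u := by
    intro x
    rcases le_or_gt 0 x with h | h
    · rw [intervalIntegral.integral_of_le h]
    · have e1 : Ioc (0:ℝ) x = ∅ := Ioc_eq_empty (by linarith)
      have e2 : ∫ u in Ioc x 0, g u = 0 := by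
        rw [setIntegral_congr_fun measurableSet_Ioc (fun u hu => hgle u hu.2)]
        simp
      rw [e1, intervalIntegral.integral_symm, intervalIntegral.integral_of_le h.le, e2]
      simp
  have hcontN : Continuous fun x => ∫ u in Ioc (0:ℝ) x, g u := by
    have heq : (fun x => ∫ u in Ioc (0:ℝ) x, g u) = fun x => ∫ u in (0:ℝ)..x, g u := funext hN
    rw [heq]
    exact intervalIntegral.continuous_primitive (fun a b => hglob.intervalIntegrable) 0
  have hmonoN : Monotone fun x => ∫ u in Ioc (0:ℝ) x, g u := by
    intro a b hab
    exact setIntegral_mono_set hglob.integrableOn (Eventually.of_forall hg0)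
      (HasSubset.Subset.eventuallyLE (Ioc_subset_Ioc_right hab))
  have hzero : ∀ y ≤ 0, Lf y = 0 := by
    intro y hy
    rw [hLdef y, Ioc_eq_empty (not_lt.2 hy)]
    simp
  have hnn : ∀ y, 0 ≤ Lf y := by
    intro y
    rw [hLdef y]
    exact div_nonneg (setIntegral_nonneg measurableSet_Ioc fun u _ => hg0 u) hgpos.le
  have hle1 : ∀ y, Lf y ≤ 1 := by
    intro y
    rw [hLdef y, div_le_one hgpos]
    rcases le_or_gt y 1 with h | h
    · exact hmonoN h
    · have hsplit : ∫ u in Ioc (0:ℝ) y, g u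
          = (∫ u in Ioc (0:ℝ) 1, g u) + ∫ u in Ioc (1:ℝ) y, g u := by
        rw [← Ioc_union_Ioc_eq_Ioc zero_le_one h.le]
        exact setIntegral_union (Set.Ioc_disjoint_Ioc_of_le le_rfl) measurableSet_Ioc hint
          hglob.integrableOn
      have hz : ∫ u in Ioc (1:ℝ) y, g u = 0 := by
        rw [setIntegral_congr_fun measurableSet_Ioc (fun u hu => hggt u hu.1)]
        simp
      rw [hsplit, hz, add_zero]
  have h1 : Lf 1 = 1 := by
    rw [hLdef 1]
    exact div_self hgpos.ne'
  have hmono : Monotone Lf := by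
    intro a b hab
    rw [hLdef a, hLdef b]
    exact div_mono_num hgpos (hmonoN hab)
  have hcont : Continuous Lf := by
    have heq : Lf = fun x => (∫ u in Ioc (0:ℝ) x, g u) / ∫ u in Ioc (0:ℝ) 1, g u :=
      funext hLdef
    rw [heq]
    exact hcontN.div_const _
  refine ⟨hzero, hnn, hle1, h1, hmono, hcont, ?_⟩
  intro u hu
  have h00 : ∫ v in Ioc (0:ℝ) (0:ℝ), g v = 0 := by
    rw [Ioc_eq_empty (lt_irrefl 0)]
    simp
  have htend : Tendsto (fun x => ∫ v in Ioc (0:ℝ) x, g v) (nhds 0) (nhds 0) := by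
    have h := hcontN.tendsto 0
    rwa [h00] at h
  have hmem : (fun x => ∫ v in Ioc (0:ℝ) x, g v) ⁻¹' Iio (u * ∫ v in Ioc (0:ℝ) 1, g v)
      ∈ nhds (0:ℝ) := by
    refine htend (Iio_mem_nhds ?_)
    exact mul_pos hu hgpos
  obtain ⟨δ, hδ0, hδ⟩ := Metric.mem_nhds_iff.1 hmem
  refine ⟨δ/2, by positivity, ?_⟩
  have hball : (δ/2 : ℝ) ∈ Metric.ball (0:ℝ) δ := by
    rw [Metric.mem_ball, Real.dist_eq, sub_zero, abs_of_pos (by positivity)]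
    linarith
  have hlt := hδ hball
  rw [mem_preimage, mem_Iio] at hlt
  rw [hLdef (δ/2), div_lt_iff₀ hgpos]
  exact hlt

private lemma Qfacts (Lf : ℝ → ℝ) (h0 : ∀ y ≤ 0, Lf y = 0) (hnn : ∀ y, 0 ≤ Lf y)
    (hle1 : ∀ y, Lf y ≤ 1) (h1 : Lf 1 = 1) (hmono : Monotone Lf)
    (hsmall : ∀ u, 0 < u → ∃ y, 0 < y ∧ Lf y < u) :
    (∀ u ∈ Ioc (0:ℝ) 1, 0 ≤ genInv Lf u ∧ genInv Lf u ≤ 1) ∧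
    (∀ u u', 0 < u → u ≤ u' → u' ≤ 1 → genInv Lf u ≤ genInv Lf u') ∧
    Measurable (fun u => genInv Lf (min u 1)) ∧
    (∀ u, 0 ≤ genInv Lf (min u 1) ∧ genInv Lf (min u 1) ≤ 1) ∧
    IntegrableOn (fun u => genInv Lf u ^ 2) (Ioc (0:ℝ) 1) ∧
    0 < ∫ u in Ioc (0:ℝ) 1, genInv Lf u ^ 2 := by
  have q01 : ∀ u ∈ Ioc (0:ℝ) 1, 0 ≤ genInv Lf u ∧ genInv Lf u ≤ 1 := fun u hu =>
    ⟨genInv_nonneg h0 hu.1, genInv_le_one h0 h1 hu.1 hu.2⟩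
  have qmono : ∀ u u', 0 < u → u ≤ u' → u' ≤ 1 → genInv Lf u ≤ genInv Lf u' :=
    fun u u' h h' h'' => genInv_mono_le h0 h1 h h' h''
  have ψ01 : ∀ u, 0 ≤ genInv Lf (min u 1) ∧ genInv Lf (min u 1) ≤ 1 := by
    intro u
    rcases le_or_gt u 0 with h | h
    · rw [min_eq_left (h.trans zero_le_one), genInv_zero_of_nonpos hnn h]
      norm_num
    · exact q01 _ ⟨lt_min h one_pos, min_le_right _ _⟩
  have ψmono : Monotone (fun u => genInv Lf (min u 1)) := by
    intro u u' huu'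
    rcases le_or_gt u 0 with h | h
    · show genInv Lf (min u 1) ≤ genInv Lf (min u' 1)
      rw [min_eq_left (h.trans zero_le_one), genInv_zero_of_nonpos hnn h]
      exact (ψ01 u').1
    · exact qmono _ _ (lt_min h one_pos) (min_le_min huu' le_rfl) (min_le_right _ _)
  have ψmeas : Measurable (fun u => genInv Lf (min u 1)) := ψmono.measurable
  have qint : IntegrableOn (fun u => genInv Lf u ^ 2) (Ioc (0:ℝ) 1) := by
    have h := intOn_comp (fun u => genInv Lf (min u 1)) ψmeas ψ01 1
    simp only [one_mul] at h
    exact h.congr_fun (fun u hu => by simp only [min_eq_left hu.2]) measurableSet_Ioc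
  refine ⟨q01, qmono, ψmeas, ψ01, qint, ?_⟩
  obtain ⟨y, hy0, hy⟩ := hsmall (1/2) (by norm_num)
  have hy'0 : 0 < min y 1 := lt_min hy0 one_pos
  have hy' : Lf (min y 1) < 1/2 := lt_of_le_of_lt (hmono (min_le_left _ _)) hy
  have hQlb : ∀ u ∈ Ioc (1/2 : ℝ) 1, (min y 1) ^ 2 ≤ genInv Lf u ^ 2 := by
    intro u hu
    have hge : min y 1 ≤ genInv Lf u := genInv_ge hmono h1 hu.2 (lt_trans hy' hu.1)
    exact pow_le_pow_left₀ hy'0.le hge 2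
  have hsub : Ioc (1/2 : ℝ) 1 ⊆ Ioc (0:ℝ) 1 := Ioc_subset_Ioc_left (by norm_num)
  have hone : (min y 1) ^ 2 * (volume (Ioc (1/2:ℝ) 1)).toReal
      ≤ ∫ u in Ioc (1/2:ℝ) 1, genInv Lf u ^ 2 :=
    setIntegral_ge_of_const_le_real measurableSet_Ioc
      (by rw [Real.volume_Ioc]; exact ENNReal.ofReal_ne_top) hQlb (qint.mono_set hsub)
  have htwo : ∫ u in Ioc (1/2:ℝ) 1, genInv Lf u ^ 2 ≤ ∫ u in Ioc (0:ℝ) 1, genInv Lf u ^ 2 :=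
    setIntegral_mono_set qint (Eventually.of_forall fun u => sq_nonneg _)
      (HasSubset.Subset.eventuallyLE hsub)
  have hvol : (volume (Ioc (1/2:ℝ) 1)).toReal = 1/2 := by
    rw [Real.volume_Ioc]
    norm_num
  rw [hvol] at hone
  nlinarith [pow_pos hy'0 2]

private noncomputable def stmtSeq : ℕ → ℝ × ℝ
  | 0 => (0, 1)
  | k+1 => (1/(1+2*(stmtSeq k).2), 1/(1+2*(stmtSeq k).1))

private lemma stmtSeq_range : ∀ k, 0 ≤ (stmtSeq k).1 ∧ (stmtSeq k).1 ≤ 1/2 ∧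
    1/2 ≤ (stmtSeq k).2 ∧ (stmtSeq k).2 ≤ 1 := by
  intro k
  induction k with
  | zero => norm_num [stmtSeq]
  | succ k ih =>
    obtain ⟨h1, h2, h3, h4⟩ := ih
    have d1 : (0:ℝ) < 1 + 2*(stmtSeq k).2 := by linarith
    have d2 : (0:ℝ) < 1 + 2*(stmtSeq k).1 := by linarith
    show 0 ≤ 1/(1+2*(stmtSeq k).2) ∧ 1/(1+2*(stmtSeq k).2) ≤ 1/2 ∧
      1/2 ≤ 1/(1+2*(stmtSeq k).1) ∧ 1/(1+2*(stmtSeq k).1) ≤ 1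
    refine ⟨by positivity, ?_, ?_, ?_⟩
    · rw [div_le_div_iff₀ d1 (by norm_num : (0:ℝ) < 2)]
      linarith
    · rw [div_le_div_iff₀ (by norm_num : (0:ℝ) < 2) d2]
      linarith
    · rw [div_le_one d2]
      linarith

private lemma stmtSeq_step (k : ℕ) :
    (stmtSeq (k+1)).2 - 1/2 ≤ 1/2 - (stmtSeq k).1 ∧
    1/2 - (stmtSeq (k+1)).1 ≤ ((stmtSeq k).2 - 1/2)/2 := by
  obtain ⟨h1, h2, h3, h4⟩ := stmtSeq_range k
  have d1 : (0:ℝ) < 1 + 2*(stmtSeq k).2 := by linarith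
  have d2 : (0:ℝ) < 1 + 2*(stmtSeq k).1 := by linarith
  constructor
  · show 1/(1+2*(stmtSeq k).1) - 1/2 ≤ 1/2 - (stmtSeq k).1
    have key : 1/(1+2*(stmtSeq k).1) ≤ 1 - (stmtSeq k).1 := by
      rw [div_le_iff₀ d2]
      nlinarith
    linarith
  · show 1/2 - 1/(1+2*(stmtSeq k).2) ≤ ((stmtSeq k).2 - 1/2)/2
    have key : 3/4 - (stmtSeq k).2/2 ≤ 1/(1+2*(stmtSeq k).2) := by
      rw [le_div_iff₀ d1]
      nlinarith [sq_nonneg ((stmtSeq k).2 - 1/2)]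
    linarith

private noncomputable def stmtM (k : ℕ) : ℝ :=
  max ((stmtSeq k).2 - 1/2) (1/2 - (stmtSeq k).1)

private lemma stmtM_nonneg (k : ℕ) : 0 ≤ stmtM k := by
  obtain ⟨h1, h2, h3, h4⟩ := stmtSeq_range k
  exact le_max_of_le_left (by linarith)

private lemma stmtM_succ (k : ℕ) : stmtM (k+1) ≤ stmtM k := by
  obtain ⟨hs1, hs2⟩ := stmtSeq_step k
  obtain ⟨h1, h2, h3, h4⟩ := stmtSeq_range k
  refine max_le ?_ ?_
  · exact le_trans hs1 (le_max_right _ _)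
  · refine le_trans hs2 (le_trans ?_ (le_max_left _ _))
    linarith
  
private lemma stmtM_two (k : ℕ) : stmtM (k+2) ≤ stmtM k / 2 := by
  obtain ⟨hs1, hs2⟩ := stmtSeq_step (k+1)
  obtain ⟨ht1, ht2⟩ := stmtSeq_step k
  simp only [show k+1+1 = k+2 from rfl] at hs1 hs2
  have h1 := le_max_left ((stmtSeq k).2 - 1/2) (1/2 - (stmtSeq k).1)
  have h2 := le_max_right ((stmtSeq k).2 - 1/2) (1/2 - (stmtSeq k).1)
  unfold stmtM
  refine max_le ?_ ?_
  · linarith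
  · linarith

private lemma stmtM_anti : Antitone stmtM :=
  antitone_nat_of_succ_le stmtM_succ

private lemma stmtM_pow : ∀ j, stmtM (2*j) ≤ (1/2)^j * (1/2) := by
  intro j
  induction j with
  | zero =>
    show stmtM 0 ≤ 1 * (1/2)
    unfold stmtM
    norm_num [stmtSeq]
  | succ j ih =>
    have h := stmtM_two (2*j)
    have heq : 2*(j+1) = 2*j+2 := by ring
    rw [heq]
    calc stmtM (2*j+2) ≤ stmtM (2*j)/2 := h
      _ ≤ ((1/2)^j * (1/2))/2 := by linarith
      _ = (1/2)^(j+1) * (1/2) := by ring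

/-- The comonotone marginal Lorenz iteration
`L^0(x) = ∫_0^x (F1⁻¹)² / ∫_0^1 (F1⁻¹)²`, `L^{i+1}(x) = ∫_0^x (L^{i,-1})² / ∫_0^1 (L^{i,-1})²`
converges uniformly on `[0,1]` to the square law `x ↦ x²`. -/
theorem stmt10 (F1 : ℝ → ℝ) (L : ℕ → ℝ → ℝ)
    (hF1mono : Monotone F1)
    (hF1neg : ∀ x, x < 0 → F1 x = 0)
    (hF1lim : Tendsto F1 atTop (nhds 1))
    (hpos : 0 < ∫ u in Ioc (0:ℝ) 1, (genInv F1 u) ^ 2)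
    (hfin : IntegrableOn (fun u => (genInv F1 u) ^ 2) (Ioc (0:ℝ) 1))
    (hL0 : ∀ x, L 0 x =
      (∫ u in Ioc (0:ℝ) x, (genInv F1 u) ^ 2) / ∫ u in Ioc (0:ℝ) 1, (genInv F1 u) ^ 2)
    (hLrec : ∀ i x, L (i + 1) x =
      (∫ u in Ioc (0:ℝ) x, (genInv (L i) u) ^ 2) /
        ∫ u in Ioc (0:ℝ) 1, (genInv (L i) u) ^ 2) :
    TendstoUniformlyOn (fun n x => L n x) (fun x => x ^ 2) atTop (Icc (0:ℝ) 1) := by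
  -- Facts about all iterates
  have fact : ∀ n,
      (∀ y ≤ 0, L n y = 0) ∧ (∀ y, 0 ≤ L n y) ∧ (∀ y, L n y ≤ 1) ∧ L n 1 = 1 ∧
      Monotone (L n) ∧ Continuous (L n) ∧ (∀ u, 0 < u → ∃ y, 0 < y ∧ L n y < u) ∧
      IntegrableOn (fun u => genInv (L n) u ^ 2) (Ioc (0:ℝ) 1) ∧
      0 < ∫ u in Ioc (0:ℝ) 1, genInv (L n) u ^ 2 := by
    intro n
    induction n with
    | zero =>
      have hF1nonneg : ∀ y, 0 ≤ F1 y := by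
        intro y
        rcases lt_or_ge y 0 with h | h
        · rw [hF1neg y h]
        · rw [← hF1neg (-1) (by norm_num)]
          exact hF1mono (by linarith)
      have hF1le1 : ∀ y, F1 y ≤ 1 := hF1mono.ge_of_tendsto hF1lim
      have hq0 : ∀ u ≤ 0, genInv F1 u ^ 2 = 0 := fun u hu => by
        rw [genInv_zero_of_nonpos hF1nonneg hu]; norm_num
      have hq1 : ∀ u, 1 < u → genInv F1 u ^ 2 = 0 := fun u hu => by
        rw [genInv_zero_of_gt_one hF1le1 hu]; norm_num
      obtain ⟨l1, l2, l3, l4, l5, l6, l7⟩ :=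
        Lfacts (fun u => genInv F1 u ^ 2) (L 0) (fun u => sq_nonneg _) hq0 hq1 hfin hpos hL0
      obtain ⟨_, _, _, _, qint, qcpos⟩ := Qfacts (L 0) l1 l2 l3 l4 l5 l7
      exact ⟨l1, l2, l3, l4, l5, l6, l7, qint, qcpos⟩
    | succ n ih =>
      obtain ⟨p1, p2, p3, p4, p5, p6, p7, p8, p9⟩ := ih
      have hq0 : ∀ u ≤ 0, genInv (L n) u ^ 2 = 0 := fun u hu => by
        rw [genInv_zero_of_nonpos p2 hu]; norm_num
      have hq1 : ∀ u, 1 < u → genInv (L n) u ^ 2 = 0 := fun u hu => by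
        rw [genInv_zero_of_gt_one p3 hu]; norm_num
      obtain ⟨l1, l2, l3, l4, l5, l6, l7⟩ :=
        Lfacts (fun u => genInv (L n) u ^ 2) (L (n+1)) (fun u => sq_nonneg _) hq0 hq1 p8 p9
          (hLrec n)
      obtain ⟨_, _, _, _, qint, qcpos⟩ := Qfacts (L (n+1)) l1 l2 l3 l4 l5 l7
      exact ⟨l1, l2, l3, l4, l5, l6, l7, qint, qcpos⟩
  have qf : ∀ n,
      (∀ u ∈ Ioc (0:ℝ) 1, 0 ≤ genInv (L n) u ∧ genInv (L n) u ≤ 1) ∧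
      (∀ u u', 0 < u → u ≤ u' → u' ≤ 1 → genInv (L n) u ≤ genInv (L n) u') ∧
      Measurable (fun u => genInv (L n) (min u 1)) ∧
      (∀ u, 0 ≤ genInv (L n) (min u 1) ∧ genInv (L n) (min u 1) ≤ 1) ∧
      IntegrableOn (fun u => genInv (L n) u ^ 2) (Ioc (0:ℝ) 1) ∧
      0 < ∫ u in Ioc (0:ℝ) 1, genInv (L n) u ^ 2 := by
    intro n
    obtain ⟨p1, p2, p3, p4, p5, p6, p7, p8, p9⟩ := fact n
    exact Qfacts (L n) p1 p2 p3 p4 p5 p7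
  -- ψ-version of the recurrence
  have hcongr : ∀ n (x : ℝ), x ≤ 1 → ∫ u in Ioc (0:ℝ) x, genInv (L n) u ^ 2
      = ∫ u in Ioc (0:ℝ) x, genInv (L n) (min u 1) ^ 2 := by
    intro n x hx
    exact setIntegral_congr_fun measurableSet_Ioc
      (fun u hu => by rw [min_eq_left (le_trans hu.2 hx)])
  have hLψ : ∀ n, ∀ x ∈ Ioc (0:ℝ) 1, L (n+1) x
      = (∫ u in Ioc (0:ℝ) x, genInv (L n) (min u 1) ^ 2)
        / ∫ u in Ioc (0:ℝ) 1, genInv (L n) (min u 1) ^ 2 := by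
    intro n x hx
    rw [hLrec n x, hcongr n x hx.2, hcongr n 1 le_rfl]
  have hcψ : ∀ n, 0 < ∫ u in Ioc (0:ℝ) 1, genInv (L n) (min u 1) ^ 2 := by
    intro n
    rw [← hcongr n 1 le_rfl]
    exact (qf n).2.2.2.2.2
  -- The shape invariants
  have shape : ∀ k,
      (∀ s ∈ Ioc (0:ℝ) 1, ∀ v ∈ Ioc (0:ℝ) 1,
        genInv (L (k+1)) (s*v) ≤ s ^ (stmtSeq k).1 * genInv (L (k+1)) v) ∧
      (∀ s ∈ Ioc (0:ℝ) 1, ∀ v ∈ Ioc (0:ℝ) 1,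
        s ^ (stmtSeq k).2 * genInv (L (k+1)) v ≤ genInv (L (k+1)) (s*v)) := by
    intro k
    induction k with
    | zero =>
      constructor
      · intro s hs v hv
        show genInv (L 1) (s*v) ≤ s ^ (0:ℝ) * genInv (L 1) v
        rw [Real.rpow_zero, one_mul]
        have hsv : 0 < s * v := mul_pos hs.1 hv.1
        exact (qf 1).2.1 _ _ hsv (by nlinarith [hs.1.le, hs.2, hv.1.le]) hv.2
      · intro s hs v hv
        show s ^ (1:ℝ) * genInv (L 1) v ≤ genInv (L 1) (s*v)
        -- multiplicative upper bound for L 1 with exponent 1, from monotonicity of Q 0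
        have hshape0 : ∀ s' ∈ Ioc (0:ℝ) 1, ∀ v' ∈ Ioc (0:ℝ) 1,
            genInv (L 0) (min (s'*v') 1) ≤ s' ^ (0:ℝ) * genInv (L 0) (min v' 1) := by
          intro s' hs' v' hv'
          rw [Real.rpow_zero, one_mul, min_eq_left (by nlinarith [hs'.1.le, hs'.2, hv'.1.le, hv'.2] : s'*v' ≤ 1), min_eq_left hv'.2]
          exact (qf 0).2.1 _ _ (mul_pos hs'.1 hv'.1) (by nlinarith [hs'.1.le, hs'.2, hv'.1.le]) hv'.2
        have hmultU := Lmult_up (L 1) (fun u => genInv (L 0) (min u 1)) (qf 0).2.2.1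
          (qf 0).2.2.2.1 le_rfl hshape0 (hcψ 0) (hLψ 0)
        have hmultU' : ∀ x ∈ Ioc (0:ℝ) 1, ∀ y ∈ Ioc (0:ℝ) 1,
            L 1 (x * y) ≤ x ^ (1:ℝ) * L 1 y := by
          intro x hx y hy
          have := hmultU x hx y hy
          rwa [show (1:ℝ) + 2 * 0 = 1 by norm_num] at this
        obtain ⟨p1, p2, p3, p4, p5, p6, p7, p8, p9⟩ := fact 1
        have h := inv_lower (L 1) le_rfl p1 p4 (qf 1).1 hmultU' s hs v hv
        rwa [show (1:ℝ)/1 = 1 by norm_num] at h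
    | succ k ih =>
      obtain ⟨ihU, ihD⟩ := ih
      obtain ⟨hr1, hr2, hr3, hr4⟩ := stmtSeq_range k
      -- shapes for ψ (k+1)
      have hshapeU : ∀ s ∈ Ioc (0:ℝ) 1, ∀ v ∈ Ioc (0:ℝ) 1,
          genInv (L (k+1)) (min (s*v) 1) ≤ s ^ (stmtSeq k).1 * genInv (L (k+1)) (min v 1) := by
        intro s hs v hv
        rw [min_eq_left (by nlinarith [hs.1.le, hs.2, hv.1.le, hv.2] : s*v ≤ 1),
          min_eq_left hv.2]
        exact ihU s hs v hv
      have hshapeD : ∀ s ∈ Ioc (0:ℝ) 1, ∀ v ∈ Ioc (0:ℝ) 1,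
          s ^ (stmtSeq k).2 * genInv (L (k+1)) (min v 1) ≤ genInv (L (k+1)) (min (s*v) 1) := by
        intro s hs v hv
        rw [min_eq_left (by nlinarith [hs.1.le, hs.2, hv.1.le, hv.2] : s*v ≤ 1),
          min_eq_left hv.2]
        exact ihD s hs v hv
      have hmultU := Lmult_up (L (k+2)) (fun u => genInv (L (k+1)) (min u 1)) (qf (k+1)).2.2.1
        (qf (k+1)).2.2.2.1 hr1 hshapeU (hcψ (k+1)) (hLψ (k+1))
      have hmultD := Lmult_down (L (k+2)) (fun u => genInv (L (k+1)) (min u 1)) (qf (k+1)).2.2.1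
        (qf (k+1)).2.2.2.1 (by linarith) hshapeD (hcψ (k+1)) (hLψ (k+1))
      obtain ⟨p1, p2, p3, p4, p5, p6, p7, p8, p9⟩ := fact (k+2)
      constructor
      · intro s hs v hv
        show genInv (L (k+2)) (s*v) ≤ s ^ (1/(1+2*(stmtSeq k).2)) * genInv (L (k+2)) v
        exact inv_upper (L (k+2)) (by linarith) p6 p1 p4 (qf (k+2)).1 (qf (k+2)).2.1
          hmultD s hs v hv
      · intro s hs v hv
        show s ^ (1/(1+2*(stmtSeq k).1)) * genInv (L (k+2)) v ≤ genInv (L (k+2)) (s*v)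
        exact inv_lower (L (k+2)) (by linarith) p1 p4 (qf (k+2)).1 hmultU s hs v hv
  -- Sandwich for L (k+2)
  have sandwich : ∀ k, ∀ x ∈ Ioc (0:ℝ) 1,
      x ^ (1 + 2*(stmtSeq k).2) ≤ L (k+2) x ∧ L (k+2) x ≤ x ^ (1 + 2*(stmtSeq k).1) := by
    intro k x hx
    obtain ⟨shU, shD⟩ := shape k
    obtain ⟨hr1, hr2, hr3, hr4⟩ := stmtSeq_range k
    have hone : (1:ℝ) ∈ Ioc (0:ℝ) 1 := ⟨one_pos, le_rfl⟩
    have hshapeU : ∀ s ∈ Ioc (0:ℝ) 1, ∀ v ∈ Ioc (0:ℝ) 1,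
        genInv (L (k+1)) (min (s*v) 1) ≤ s ^ (stmtSeq k).1 * genInv (L (k+1)) (min v 1) := by
      intro s hs v hv
      rw [min_eq_left (by nlinarith [hs.1.le, hs.2, hv.1.le, hv.2] : s*v ≤ 1),
        min_eq_left hv.2]
      exact shU s hs v hv
    have hshapeD : ∀ s ∈ Ioc (0:ℝ) 1, ∀ v ∈ Ioc (0:ℝ) 1,
        s ^ (stmtSeq k).2 * genInv (L (k+1)) (min v 1) ≤ genInv (L (k+1)) (min (s*v) 1) := by
      intro s hs v hv
      rw [min_eq_left (by nlinarith [hs.1.le, hs.2, hv.1.le, hv.2] : s*v ≤ 1),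
        min_eq_left hv.2]
      exact shD s hs v hv
    have hmultU := Lmult_up (L (k+2)) (fun u => genInv (L (k+1)) (min u 1)) (qf (k+1)).2.2.1
      (qf (k+1)).2.2.2.1 hr1 hshapeU (hcψ (k+1)) (hLψ (k+1))
    have hmultD := Lmult_down (L (k+2)) (fun u => genInv (L (k+1)) (min u 1)) (qf (k+1)).2.2.1
      (qf (k+1)).2.2.2.1 (by linarith) hshapeD (hcψ (k+1)) (hLψ (k+1))
    obtain ⟨p1, p2, p3, p4, p5, p6, p7, p8, p9⟩ := fact (k+2)
    constructor
    · have h := hmultD x hx 1 hone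
      rwa [mul_one, p4, mul_one] at h
    · have h := hmultU x hx 1 hone
      rwa [mul_one, p4, mul_one] at h
  -- Final uniform convergence
  rw [Metric.tendstoUniformlyOn_iff]
  intro ε hε
  obtain ⟨j, hj⟩ := exists_pow_lt_of_lt_one (show (0:ℝ) < ε/4 by linarith)
    (show (1/2 : ℝ) < 1 by norm_num)
  rw [eventually_atTop]
  refine ⟨2*j + 2, fun n hn x hx => ?_⟩
  obtain ⟨k, hk⟩ : ∃ k, n = k + 2 := ⟨n - 2, by omega⟩
  have hk2j : 2*j ≤ k := by omega
  subst hk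
  obtain ⟨hr1, hr2, hr3, hr4⟩ := stmtSeq_range k
  have hdist : dist (x ^ 2) (L (k+2) x) ≤ 2 * ((stmtSeq k).2 - (stmtSeq k).1) := by
    rcases eq_or_lt_of_le hx.1 with hx0 | hx0
    · -- x = 0
      obtain ⟨p1, p2, p3, p4, p5, p6, p7, p8, p9⟩ := fact (k+2)
      rw [← hx0, p1 0 le_rfl]
      simp only [ne_eq, OfNat.ofNat_ne_zero, not_false_eq_true, zero_pow, dist_self]
      linarith
    · obtain ⟨hlo, hhi⟩ := sandwich k x ⟨hx0, hx.2⟩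
      have hsq : x ^ (2:ℝ) = x ^ 2 := by
        rw [show (2:ℝ) = ((2:ℕ):ℝ) by norm_num, Real.rpow_natCast]
      have hmid1 : x ^ (1 + 2*(stmtSeq k).2) ≤ x ^ (2:ℝ) :=
        Real.rpow_le_rpow_of_exponent_ge hx0 hx.2 (by linarith)
      have hmid2 : x ^ (2:ℝ) ≤ x ^ (1 + 2*(stmtSeq k).1) :=
        Real.rpow_le_rpow_of_exponent_ge hx0 hx.2 (by linarith)
      have hdiffb : x ^ (1 + 2*(stmtSeq k).1) - x ^ (1 + 2*(stmtSeq k).2)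
          ≤ (1 + 2*(stmtSeq k).2) - (1 + 2*(stmtSeq k).1) :=
        rpow_diff_le hx0.le hx.2 (by linarith) (by linarith)
      rw [Real.dist_eq, abs_le]
      rw [hsq] at hmid1 hmid2
      constructor
      · linarith
      · linarith
  have hmk : (stmtSeq k).2 - (stmtSeq k).1 ≤ 2 * stmtM k := by
    have h1 := le_max_left ((stmtSeq k).2 - 1/2) (1/2 - (stmtSeq k).1)
    have h2 := le_max_right ((stmtSeq k).2 - 1/2) (1/2 - (stmtSeq k).1)
    unfold stmtM
    linarith
  have hmon : stmtM k ≤ stmtM (2*j) := stmtM_anti hk2j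
  have hpow := stmtM_pow j
  calc dist (x ^ 2) (L (k+2) x) ≤ 2 * ((stmtSeq k).2 - (stmtSeq k).1) := hdist
    _ ≤ 4 * stmtM k := by linarith
    _ ≤ 4 * ((1/2)^j * (1/2)) := by linarith
    _ = 2 * (1/2)^j := by ring
    _ < ε := by nlinarith [hj]
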